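/- arXiv:2507.01708 — 2 statements merged into one kernel-verified Lean document; each statement's English description precedes it below -/
import Mathlib

section
/- Let p ∈ [0,1], α ∈ [0,1], and (α_n) a sequence in [0,1] with α_n → α. Define ℓ_1 = 1 and ℓ_n := ∏_{k=1}^{n-1} (1 + (2p-1)(α_{k+1} - α)/(k + (2p-1)α)) for n ≥ 2, and ρ_n := exp(∑_{k=2}^{n-1} (2p-1)(α_{k+1} - α)/k) for n ≥ 3. Then there exists a constant C > 0 such that ℓ_n / ρ_n → C as n → ∞. Consequently, (ℓ_n) is a slowly varying sequence. -/
open Filter Real Topology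
open scoped BigOperators

private lemma log_approx {x : ℝ} (hx : |x| ≤ 1/2) : |Real.log (1+x) - x| ≤ 2*x^2 := by
  obtain ⟨hl, hr⟩ := abs_le.1 hx
  have h1 : (0:ℝ) < 1 + x := by linarith
  have h2 : Real.log (1+x) ≤ x := by
    have := Real.log_le_sub_one_of_pos h1; linarith
  have h3 : x/(1+x) ≤ Real.log (1+x) := by
    have h4 : (0:ℝ) < (1+x)⁻¹ := by positivity
    have h5 := Real.log_le_sub_one_of_pos h4
    rw [Real.log_inv] at h5
    have h6 : (1+x)⁻¹ - 1 = -(x/(1+x)) := by field_simp; ring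
    rw [h6] at h5
    linarith
  have h7 : x - x/(1+x) ≤ 2*x^2 := by
    have h8 : x - x/(1+x) = x^2/(1+x) := by field_simp; ring
    rw [h8, div_le_iff₀ h1]
    nlinarith [sq_nonneg x]
  rw [abs_le]
  constructor
  · linarith
  · nlinarith [sq_nonneg x]

set_option maxHeartbeats 1000000 in
/-- ℓ_n / ρ_n → C for some C > 0; consequently (ℓ_n) is slowly varying. -/
theorem stmt_2 (p α : ℝ) (hp : p ∈ Set.Icc (0:ℝ) 1) (hα : α ∈ Set.Icc (0:ℝ) 1)
    (a : ℕ → ℝ) (ha : ∀ n, a n ∈ Set.Icc (0:ℝ) 1)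
    (haconv : Tendsto a atTop (nhds α))
    (ℓ ρ : ℕ → ℝ)
    (hℓ : ∀ n, ℓ n = ∏ k ∈ Finset.Icc 1 (n-1),
      (1 + (2*p-1) * (a (k+1) - α) / ((k:ℝ) + (2*p-1)*α)))
    (hpos : ∀ k : ℕ, 1 ≤ k → 0 < 1 + (2*p-1) * (a (k+1) - α) / ((k:ℝ) + (2*p-1)*α))
    (hρ : ∀ n, ρ n = Real.exp (∑ k ∈ Finset.Icc 2 (n-1),
      (2*p-1) * (a (k+1) - α) / (k:ℝ))) :
    (∃ C > (0:ℝ), Tendsto (fun n => ℓ n / ρ n) atTop (nhds C)) ∧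
    (∀ t > (0:ℝ), Tendsto (fun x : ℝ => ℓ ⌊x*t⌋₊ / ℓ ⌊x⌋₊) atTop (nhds 1)) := by
  obtain ⟨hp0, hp1⟩ := hp
  obtain ⟨hα0, hα1⟩ := hα
  have hpα : |(2*p-1)*α| ≤ 1 := by
    rw [abs_mul]
    have h1 : |2*p-1| ≤ 1 := by rw [abs_le]; constructor <;> linarith
    have h2 : |α| ≤ 1 := by rw [abs_le]; constructor <;> linarith
    nlinarith [abs_nonneg (2*p-1), abs_nonneg α]
  have habs : ∀ k : ℕ, |(2*p-1) * (a (k+1) - α)| ≤ 1 := by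
    intro k
    obtain ⟨h1, h2⟩ := ha (k+1)
    rw [abs_mul]
    have h3 : |2*p-1| ≤ 1 := by rw [abs_le]; constructor <;> linarith
    have h4 : |a (k+1) - α| ≤ 1 := by rw [abs_le]; constructor <;> linarith
    nlinarith [abs_nonneg (2*p-1), abs_nonneg (a (k+1) - α)]
  have hℓpos : ∀ n, 0 < ℓ n := by
    intro n; rw [hℓ n]
    exact Finset.prod_pos fun k hk => hpos k (Finset.mem_Icc.1 hk).1
  have hρpos : ∀ n, 0 < ρ n := fun n => by rw [hρ n]; exact Real.exp_pos _
  set s : ℕ → ℝ := fun k => if 2 ≤ k then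
      Real.log (1 + (2*p-1) * (a (k+1) - α) / ((k:ℝ) + (2*p-1)*α))
      - (2*p-1) * (a (k+1) - α) / (k:ℝ) else 0 with hs
  -- summability of the correction terms
  have hsummable : Summable s := by
    have hbase : Summable (fun k : ℕ => 10 * (1/(k:ℝ)^2)) :=
      (Real.summable_one_div_nat_pow.mpr one_lt_two).mul_left 10
    refine Summable.of_norm_bounded_eventually_nat hbase ?_
    filter_upwards [eventually_ge_atTop 3] with k hk3
    have hsk : s k = Real.log (1 + (2*p-1) * (a (k+1) - α) / ((k:ℝ) + (2*p-1)*α))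
        - (2*p-1) * (a (k+1) - α) / (k:ℝ) := by
      simp only [hs]; rw [if_pos (by omega : 2 ≤ k)]
    rw [hsk, Real.norm_eq_abs]
    set c := (2*p-1) * (a (k+1) - α) with hcdef
    set K := (k:ℝ) with hKdef
    have hK : (3:ℝ) ≤ K := by rw [hKdef]; exact_mod_cast hk3
    have hc1 : |c| ≤ 1 := habs k
    obtain ⟨hpα1, hpα2⟩ := abs_le.1 hpα
    have hd1 : K - 1 ≤ K + (2*p-1)*α := by linarith
    have hd2 : K + (2*p-1)*α ≤ K + 1 := by linarith
    have hdpos : (0:ℝ) < K + (2*p-1)*α := by linarith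
    have hKpos : (0:ℝ) < K := by linarith
    have hX : |c / (K + (2*p-1)*α)| ≤ 1/(K-1) := by
      rw [abs_div, abs_of_pos hdpos]
      exact div_le_div₀ zero_le_one hc1 (by linarith) hd1
    have hX2 : |c / (K + (2*p-1)*α)| ≤ 1/2 :=
      hX.trans (by rw [div_le_div_iff₀ (by linarith) two_pos]; linarith)
    have hlog := log_approx hX2
    have hXY : |c / (K + (2*p-1)*α) - c / K| ≤ 1/((K-1)*K) := by
      have heq : c / (K + (2*p-1)*α) - c / K
          = -(c * ((2*p-1)*α)) / ((K + (2*p-1)*α) * K) := by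
        field_simp
        ring
      rw [heq, abs_div, abs_neg, abs_mul, abs_of_pos (by positivity : (0:ℝ) < (K + (2*p-1)*α)*K)]
      refine div_le_div₀ zero_le_one ?_ (by nlinarith) (by nlinarith)
      calc |c| * |(2*p-1)*α| ≤ 1 * 1 :=
            mul_le_mul hc1 hpα (abs_nonneg _) zero_le_one
        _ = 1 := by ring
    have hsq : (c / (K + (2*p-1)*α))^2 ≤ (1/(K-1))^2 := by
      have h0 := abs_nonneg (c / (K + (2*p-1)*α))
      nlinarith [sq_abs (c / (K + (2*p-1)*α))]
    have e1 : 2*(1/(K-1))^2 ≤ 8*(1/K^2) := by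
      rw [div_pow, one_pow, mul_one_div, mul_one_div,
        div_le_div_iff₀ (by nlinarith) (by nlinarith)]
      nlinarith
    have e2 : 1/((K-1)*K) ≤ 2*(1/K^2) := by
      rw [mul_one_div, div_le_div_iff₀ (by nlinarith) (by nlinarith)]
      nlinarith
    have htri := abs_sub_le (Real.log (1 + c/(K + (2*p-1)*α)))
      (c/(K + (2*p-1)*α)) (c/K)
    have h10 : (10:ℝ) * (1/K^2) = 8*(1/K^2) + 2*(1/K^2) := by ring
    rw [h10]
    have hlog2 : |Real.log (1 + c/(K + (2*p-1)*α)) - c/(K + (2*p-1)*α)| ≤ 2*(1/(K-1))^2 := by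
      calc |Real.log (1 + c/(K + (2*p-1)*α)) - c/(K + (2*p-1)*α)|
          ≤ 2*(c/(K + (2*p-1)*α))^2 := hlog
        _ ≤ 2*(1/(K-1))^2 := by linarith
    calc |Real.log (1 + c/(K + (2*p-1)*α)) - c/K|
        ≤ |Real.log (1 + c/(K + (2*p-1)*α)) - c/(K + (2*p-1)*α)|
          + |c/(K + (2*p-1)*α) - c/K| := htri
      _ ≤ 2*(1/(K-1))^2 + 1/((K-1)*K) := by linarith
      _ ≤ 8*(1/K^2) + 2*(1/K^2) := by linarith
  -- the ratio ℓ n / ρ n in closed form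
  have key1 : ∀ n : ℕ, 2 ≤ n → ℓ n / ρ n =
      Real.exp ((∑ k ∈ Finset.Icc 1 1,
        Real.log (1 + (2*p-1) * (a (k+1) - α) / ((k:ℝ) + (2*p-1)*α)))
        + ∑ k ∈ Finset.range n, s k) := by
    intro n hn
    have h1 : 1 ≤ n - 1 := by omega
    have hpne : ∀ k ∈ Finset.Icc 1 (n-1),
        (1 + (2*p-1) * (a (k+1) - α) / ((k:ℝ) + (2*p-1)*α)) ≠ 0 :=
      fun k hk => (hpos k (Finset.mem_Icc.1 hk).1).ne'
    rw [hρ n, ← Real.exp_log (hℓpos n), ← Real.exp_sub]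
    congr 1
    rw [hℓ n, Real.log_prod hpne]
    have hsplit : ∑ k ∈ Finset.Icc 1 (n-1),
        Real.log (1 + (2*p-1) * (a (k+1) - α) / ((k:ℝ) + (2*p-1)*α)) =
        (∑ k ∈ Finset.Icc 1 1,
          Real.log (1 + (2*p-1) * (a (k+1) - α) / ((k:ℝ) + (2*p-1)*α)))
        + ∑ k ∈ Finset.Icc 2 (n-1),
          Real.log (1 + (2*p-1) * (a (k+1) - α) / ((k:ℝ) + (2*p-1)*α)) := by
      rw [show Finset.Icc 1 (n-1) = Finset.Ioc 0 (n-1) from Finset.Icc_add_one_left_eq_Ioc _ _,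
          show Finset.Icc 1 1 = Finset.Ioc 0 1 from Finset.Icc_add_one_left_eq_Ioc _ _,
          show Finset.Icc 2 (n-1) = Finset.Ioc 1 (n-1) from Finset.Icc_add_one_left_eq_Ioc _ _]
      exact (Finset.sum_Ioc_consecutive _ (by omega) h1).symm
    rw [hsplit]
    have hrange : ∑ k ∈ Finset.range n, s k = ∑ k ∈ Finset.Icc 2 (n-1), s k := by
      refine (Finset.sum_subset ?_ ?_).symm
      · intro k hk; rw [Finset.mem_Icc] at hk; rw [Finset.mem_range]; omega
      · intro k hk1 hk2
        rw [Finset.mem_range] at hk1; rw [Finset.mem_Icc] at hk2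
        simp only [hs]
        rw [if_neg]; omega
    rw [hrange]
    have hsum_eq : ∑ k ∈ Finset.Icc 2 (n-1), s k =
        ∑ k ∈ Finset.Icc 2 (n-1),
          (Real.log (1 + (2*p-1) * (a (k+1) - α) / ((k:ℝ) + (2*p-1)*α))
            - (2*p-1) * (a (k+1) - α) / (k:ℝ)) := by
      refine Finset.sum_congr rfl fun k hk => ?_
      rw [Finset.mem_Icc] at hk
      simp only [hs]
      rw [if_pos hk.1]
    rw [hsum_eq, Finset.sum_sub_distrib]
    ring
  obtain ⟨S, hS⟩ := hsummable
  have hpartial := hS.tendsto_sum_nat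
  set C := Real.exp ((∑ k ∈ Finset.Icc 1 1,
      Real.log (1 + (2*p-1) * (a (k+1) - α) / ((k:ℝ) + (2*p-1)*α))) + S) with hCdef
  have hCpos : 0 < C := by rw [hCdef]; exact Real.exp_pos _
  have hC : Tendsto (fun n => ℓ n / ρ n) atTop (nhds C) := by
    have hexp : Tendsto (fun n => Real.exp ((∑ k ∈ Finset.Icc 1 1,
        Real.log (1 + (2*p-1) * (a (k+1) - α) / ((k:ℝ) + (2*p-1)*α)))
        + ∑ k ∈ Finset.range n, s k)) atTop (nhds C) := by
      rw [hCdef]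
      exact (Real.continuous_exp.tendsto _).comp (tendsto_const_nhds.add hpartial)
    refine Tendsto.congr' ?_ hexp
    filter_upwards [eventually_ge_atTop 2] with n hn
    exact (key1 n hn).symm
  refine ⟨⟨C, hCpos, hC⟩, ?_⟩
  -- second part: slow variation
  intro t ht
  set Dsum : ℕ → ℝ := fun n => ∑ k ∈ Finset.Icc 2 (n-1),
    (2*p-1) * (a (k+1) - α) / (k:ℝ) with hDsum
  have hρD : ∀ n, ρ n = Real.exp (Dsum n) := fun n => by rw [hρ n]
  have hc0 : Tendsto (fun k : ℕ => (2*p-1) * (a (k+1) - α)) atTop (nhds 0) := by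
    have h1 : Tendsto (fun k : ℕ => a (k+1)) atTop (nhds α) :=
      haconv.comp (tendsto_add_atTop_nat 1)
    have h2 := (h1.sub_const α).const_mul (2*p-1)
    simpa using h2
  have hu : (0:ℝ) < min t 1 := lt_min ht one_pos
  have hv : (0:ℝ) < max t 1 := lt_of_lt_of_le one_pos (le_max_right t 1)
  set u := min t 1 with hu'
  set v := max t 1 with hv'
  have hD : Tendsto (fun x : ℝ => Dsum ⌊x*t⌋₊ - Dsum ⌊x⌋₊) atTop (nhds 0) := by
    rw [NormedAddCommGroup.tendsto_nhds_zero]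
    intro ε hε
    have hδpos : (0:ℝ) < ε * u / (4 * v) := by positivity
    obtain ⟨N, hN⟩ := Metric.tendsto_atTop.mp hc0 (ε * u / (4 * v)) hδpos
    replace hN : ∀ k, N ≤ k → |(2*p-1) * (a (k+1) - α)| ≤ ε * u / (4 * v) := by
      intro k hk
      have h := hN k hk
      rw [Real.dist_eq, sub_zero] at h
      exact h.le
    filter_upwards [eventually_ge_atTop (((N:ℝ) + 5) / u)] with x hx
    have hxu : (N:ℝ) + 5 ≤ x * u := by
      rw [div_le_iff₀ hu] at hx; linarith
    have hx0 : (0:ℝ) < x := by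
      nlinarith [Nat.cast_nonneg (α := ℝ) N]
    have hbounds : ∀ y : ℝ, x * u ≤ y → y ≤ x * v →
        x*u - 1 < (⌊y⌋₊:ℝ) ∧ (⌊y⌋₊:ℝ) ≤ x * v := by
      intro y h1 h2
      constructor
      · have := Nat.sub_one_lt_floor y; linarith
      · exact le_trans (Nat.floor_le (by nlinarith)) h2
    obtain ⟨hA1, hA2⟩ := hbounds (x*t)
      (mul_le_mul_of_nonneg_left (min_le_left t 1) hx0.le)
      (mul_le_mul_of_nonneg_left (le_max_left t 1) hx0.le)
    obtain ⟨hB1, hB2⟩ := hbounds x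
      (by nlinarith [min_le_right t 1])
      (by nlinarith [le_max_right t 1])
    have key : ∀ Mn mn : ℕ, mn ≤ Mn → x*u - 1 < (mn:ℝ) → (Mn:ℝ) ≤ x*v →
        |Dsum Mn - Dsum mn| < ε := by
      intro Mn mn hmM hmlb hMub
      have hmn_large : N + 3 ≤ mn := by
        have h1 : ((N + 3 : ℕ) : ℝ) < (mn:ℝ) := by push_cast; linarith
        exact (Nat.cast_lt.mp h1).le
      have hm1' : 1 ≤ mn - 1 := by omega
      have hmM' : mn - 1 ≤ Mn - 1 := by omega
      have hdiff : Dsum Mn - Dsum mn = ∑ k ∈ Finset.Ioc (mn-1) (Mn-1),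
          (2*p-1) * (a (k+1) - α) / (k:ℝ) := by
        simp only [hDsum]
        rw [show Finset.Icc 2 (Mn-1) = Finset.Ioc 1 (Mn-1) from Finset.Icc_add_one_left_eq_Ioc _ _,
            show Finset.Icc 2 (mn-1) = Finset.Ioc 1 (mn-1) from Finset.Icc_add_one_left_eq_Ioc _ _,
            ← Finset.sum_Ioc_consecutive _ hm1' hmM']
        ring
      rw [hdiff]
      have hmn_pos : (0:ℝ) < (mn:ℝ) := by
        have : (0:ℕ) < mn := by omega
        exact_mod_cast this
      have hstep : ∀ k ∈ Finset.Ioc (mn-1) (Mn-1),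
          |(2*p-1) * (a (k+1) - α) / (k:ℝ)| ≤ (ε*u/(4*v))/(mn:ℝ) := by
        intro k hk
        rw [Finset.mem_Ioc] at hk
        have hkm : mn ≤ k := by omega
        have hkmR : (mn:ℝ) ≤ (k:ℝ) := by exact_mod_cast hkm
        have hkpos : (0:ℝ) < (k:ℝ) := lt_of_lt_of_le hmn_pos hkmR
        rw [abs_div, Nat.abs_cast]
        calc |(2*p-1) * (a (k+1) - α)| / (k:ℝ)
            ≤ (ε*u/(4*v)) / (k:ℝ) :=
              (div_le_div_iff_of_pos_right hkpos).mpr (hN k (by omega))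
          _ ≤ (ε*u/(4*v)) / (mn:ℝ) :=
              div_le_div_of_nonneg_left hδpos.le hmn_pos hkmR
      have habs_sum := (Finset.abs_sum_le_sum_abs
        (fun k => (2*p-1) * (a (k+1) - α) / (k:ℝ)) (Finset.Ioc (mn-1) (Mn-1))).trans
        (Finset.sum_le_card_nsmul _ _ _ hstep)
      rw [Nat.card_Ioc, nsmul_eq_mul] at habs_sum
      have hcard : ((Mn - 1) - (mn - 1) : ℕ) = Mn - mn := by omega
      rw [hcard] at habs_sum
      have hcast : ((Mn - mn : ℕ) : ℝ) ≤ x*v := by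
        have h1 : ((Mn - mn : ℕ) : ℝ) ≤ (Mn:ℝ) := by
          exact_mod_cast Nat.cast_le.mpr (Nat.sub_le Mn mn)
        linarith
      have hmlb2 : x*u/2 ≤ (mn:ℝ) := by nlinarith [Nat.cast_nonneg (α := ℝ) N]
      have hxu2 : (0:ℝ) < x*u/2 := by nlinarith [Nat.cast_nonneg (α := ℝ) N]
      calc |∑ k ∈ Finset.Ioc (mn-1) (Mn-1), (2*p-1) * (a (k+1) - α) / (k:ℝ)|
          ≤ ((Mn - mn : ℕ) : ℝ) * ((ε*u/(4*v))/(mn:ℝ)) := habs_sum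
        _ ≤ (x*v) * ((ε*u/(4*v))/(x*u/2)) := by
            refine mul_le_mul hcast ?_ (by positivity) (by nlinarith)
            exact div_le_div_of_nonneg_left hδpos.le hxu2 hmlb2
        _ = ε/2 := by
            field_simp
            ring
        _ < ε := by linarith
    rcases le_total ⌊x⌋₊ ⌊x*t⌋₊ with hcase | hcase
    · rw [Real.norm_eq_abs]
      exact key ⌊x*t⌋₊ ⌊x⌋₊ hcase hB1 hA2
    · rw [Real.norm_eq_abs, abs_sub_comm]
      exact key ⌊x⌋₊ ⌊x*t⌋₊ hcase hA1 hB2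
  have hH : Tendsto (fun x : ℝ => ρ ⌊x*t⌋₊ / ρ ⌊x⌋₊) atTop (nhds 1) := by
    have h := (Real.continuous_exp.tendsto 0).comp hD
    rw [Real.exp_zero] at h
    refine h.congr fun x => ?_
    simp only [Function.comp_apply]
    rw [Real.exp_sub, hρD ⌊x*t⌋₊, hρD ⌊x⌋₊]
  have hCne : C ≠ 0 := ne_of_gt hCpos
  have hft : Tendsto (fun x : ℝ => ⌊x * t⌋₊) atTop atTop :=
    tendsto_nat_floor_atTop.comp (tendsto_id.atTop_mul_const ht)
  have hfx : Tendsto (fun x : ℝ => ⌊x⌋₊) atTop atTop := tendsto_nat_floor_atTop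
  have hF := hC.comp hft
  have hG := hC.comp hfx
  have hmain := (hF.div hG hCne).mul hH
  rw [div_self hCne, one_mul] at hmain
  refine hmain.congr fun x => ?_
  show (ℓ ⌊x*t⌋₊ / ρ ⌊x*t⌋₊) / (ℓ ⌊x⌋₊ / ρ ⌊x⌋₊) * (ρ ⌊x*t⌋₊ / ρ ⌊x⌋₊) = ℓ ⌊x*t⌋₊ / ℓ ⌊x⌋₊
  have h1 := (hρpos ⌊x*t⌋₊).ne'
  have h2 := (hρpos ⌊x⌋₊).ne'
  have h3 := (hℓpos ⌊x⌋₊).ne'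
  have h4 := (hℓpos ⌊x*t⌋₊).ne'
  field_simp
end

section
/- Let p ∈ [0,1], α ∈ [0,1] with α(2p-1) < 1/2, (α_k) a sequence in [0,1] with α_k → α, and a_n := ∏_{k=1}^{n-1}(1+(2p-1)α_{k+1}/k). Suppose A_n² ∼ C·Γ(α(2p-1)+1)²·n^{1-2α(2p-1)}·ℓ_n^{-2} with C > 0 and ℓ_n the slowly varying sequence ∏_{k=1}^{n-1}(1+(2p-1)(α_{k+1}-α)/(k+(2p-1)α)). Then for each fixed t > 0, a_{⌊nt⌋}·A_n ∼ √C · t^{α(2p-1)} · √n as n → ∞. -/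
open Filter Real Topology
open scoped BigOperators

lemma fact_prod_real (n : ℕ) : ∏ j ∈ Finset.range n, ((j:ℝ)+1) = (n.factorial : ℝ) := by
  induction n with
  | zero => simp
  | succ n ih => rw [Finset.prod_range_succ, ih, Nat.factorial_succ]; push_cast; ring

lemma Icc_one_sub_one_eq_Ico (n : ℕ) : Finset.Icc 1 (n-1) = Finset.Ico 1 n := by
  cases n with
  | zero => simp
  | succ n => rw [Nat.succ_sub_one, Finset.Ico_add_one_right_eq_Icc]

lemma aux_gamma {γ : ℝ} (hγ : -1 < γ) :
    Tendsto (fun n : ℕ => (∏ k ∈ Finset.Icc 1 (n-1), (1 + γ/(k:ℝ))) * Real.Gamma (γ+1) / (n:ℝ)^γ)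
      atTop (nhds 1) := by
  have hG : 0 < Real.Gamma (γ+1) := Real.Gamma_pos_of_pos (by linarith)
  set G := Real.Gamma (γ+1) with hGdef
  have hP : ∀ n : ℕ, 0 < ∏ j ∈ Finset.range (n+1), (γ+1+(j:ℝ)) := by
    intro n
    exact Finset.prod_pos (fun j _ => by have : (0:ℝ) ≤ j := Nat.cast_nonneg j; linarith)
  have hGS : ∀ n : ℕ, Real.GammaSeq (γ+1) n
      = (n:ℝ)^(γ+1) * (n.factorial : ℝ) / ∏ j ∈ Finset.range (n+1), (γ+1+(j:ℝ)) := by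
    intro n
    rfl
  have hg : ∀ n : ℕ, (∏ k ∈ Finset.Icc 1 ((n+2)-1), (1 + γ/(k:ℝ)))
      = (∏ j ∈ Finset.range (n+1), (γ+1+(j:ℝ))) / ((n+1).factorial : ℝ) := by
    intro n
    have h1 : Finset.Icc 1 ((n+2)-1) = Finset.Ico 1 (n+2) := by
      rw [show n+2 = (n+1)+1 from rfl, Finset.Ico_add_one_right_eq_Icc]
      norm_num
    rw [h1, Finset.prod_Ico_eq_prod_range]
    have : ∀ j ∈ Finset.range (n+2-1), (1 + γ/((1+j:ℕ):ℝ)) = (γ+1+(j:ℝ))/((j:ℝ)+1) := by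
      intro j _
      have : ((1+j:ℕ):ℝ) = (j:ℝ)+1 := by push_cast; ring
      rw [this]
      have hj : (j:ℝ)+1 ≠ 0 := by positivity
      field_simp
      ring
    rw [Finset.prod_congr rfl this, Finset.prod_div_distrib, fact_prod_real]
    norm_num
  have key : ∀ n : ℕ, 1 ≤ n →
      (∏ k ∈ Finset.Icc 1 ((n+2)-1), (1 + γ/(k:ℝ))) * G / (((n+2:ℕ)):ℝ)^γ
      = (G / Real.GammaSeq (γ+1) n) * (((n:ℝ)/((n:ℝ)+1)) * (((n:ℝ)/((n:ℝ)+2))^γ)) := by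
    intro n hn
    have hn0 : (0:ℝ) < (n:ℝ) := by exact_mod_cast hn
    have h2 : (0:ℝ) < (n:ℝ)+2 := by linarith
    rw [hg n, hGS n]
    have hcast : (((n+2:ℕ)):ℝ) = (n:ℝ)+2 := by push_cast; ring
    rw [hcast]
    rw [Real.rpow_add_one hn0.ne' γ]
    rw [Real.div_rpow hn0.le h2.le]
    have hfact : ((n+1).factorial : ℝ) = ((n:ℝ)+1) * (n.factorial : ℝ) := by
      rw [Nat.factorial_succ]; push_cast; ring
    rw [hfact]
    have l1 : (0:ℝ) < (n:ℝ)^γ := Real.rpow_pos_of_pos hn0 γ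
    have l2 : (0:ℝ) < ((n:ℝ)+2)^γ := Real.rpow_pos_of_pos h2 γ
    have l3 : (n.factorial : ℝ) ≠ 0 := by positivity
    have l4 := (hP n).ne'
    field_simp
  have lim1 : Tendsto (fun n : ℕ => G / Real.GammaSeq (γ+1) n) atTop (nhds 1) := by
    have := Real.GammaSeq_tendsto_Gamma (γ+1)
    have h : Tendsto (fun n : ℕ => G / Real.GammaSeq (γ+1) n) atTop (nhds (G / G)) :=
      tendsto_const_nhds.div this hG.ne'
    simpa [div_self hG.ne'] using h
  have lim2 : Tendsto (fun n : ℕ => (n:ℝ)/((n:ℝ)+1)) atTop (nhds 1) :=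
    tendsto_natCast_div_add_atTop (1:ℝ)
  have lim3 : Tendsto (fun n : ℕ => ((n:ℝ)/((n:ℝ)+2))^γ) atTop (nhds 1) := by
    have h2 : Tendsto (fun n : ℕ => (n:ℝ)/((n:ℝ)+2)) atTop (nhds 1) :=
      tendsto_natCast_div_add_atTop (2:ℝ)
    have hc : ContinuousAt (fun x : ℝ => x ^ γ) 1 :=
      Real.continuousAt_rpow_const 1 γ (Or.inl one_ne_zero)
    have := hc.tendsto.comp h2
    simpa [Real.one_rpow, Function.comp_def] using this
  have limtot : Tendsto (fun n : ℕ =>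
      (G / Real.GammaSeq (γ+1) n) * (((n:ℝ)/((n:ℝ)+1)) * (((n:ℝ)/((n:ℝ)+2))^γ)))
      atTop (nhds 1) := by
    have := lim1.mul (lim2.mul lim3)
    simpa using this
  have shifted : Tendsto (fun n : ℕ =>
      (∏ k ∈ Finset.Icc 1 ((n+2)-1), (1 + γ/(k:ℝ))) * G / (((n+2:ℕ)):ℝ)^γ)
      atTop (nhds 1) := by
    apply limtot.congr'
    filter_upwards [eventually_ge_atTop 1] with n hn
    exact (key n hn).symm
  exact (tendsto_add_atTop_iff_nat 2).mp shifted

lemma abs_log_le_two_mul {x : ℝ} (hx : 1/2 ≤ x) : |Real.log x| ≤ 2 * |x - 1| := by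
  have hx0 : 0 < x := by linarith
  have hinv : x⁻¹ ≤ 2 := by
    rw [inv_le_comm₀ (by linarith) (by norm_num)]
    linarith
  have h1 : Real.log x ≤ x - 1 := Real.log_le_sub_one_of_pos hx0
  have h2 : Real.log x⁻¹ ≤ x⁻¹ - 1 := Real.log_le_sub_one_of_pos (inv_pos.2 hx0)
  rw [Real.log_inv] at h2
  have e : x * x⁻¹ = 1 := mul_inv_cancel₀ hx0.ne'
  rw [abs_le]
  rcases abs_cases (x - 1) with ⟨h, h'⟩ | ⟨h, h'⟩
  · constructor <;> nlinarith
  · constructor <;> nlinarith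

lemma aux_slow {t : ℝ} (ht : 0 < t) (f : ℕ → ℝ) (hfpos : ∀ k, 1 ≤ k → 0 < f k)
    (hsmall : Tendsto (fun k : ℕ => (k:ℝ) * (f k - 1)) atTop (nhds 0)) :
    Tendsto (fun n : ℕ => (∏ k ∈ Finset.Ico 1 ⌊(n:ℝ)*t⌋₊, f k) / (∏ k ∈ Finset.Ico 1 n, f k))
      atTop (nhds 1) := by
  have hL : ∀ n : ℕ, 0 < ∏ k ∈ Finset.Ico 1 n, f k := fun n =>
    Finset.prod_pos (fun k hk => hfpos k (Finset.mem_Ico.1 hk).1)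
  set S : ℕ → ℝ := fun n => ∑ k ∈ Finset.Ico 1 n, Real.log (f k) with hS
  have hlog : ∀ n : ℕ, Real.log (∏ k ∈ Finset.Ico 1 n, f k) = S n := fun n =>
    Real.log_prod (fun k hk => (hfpos k (Finset.mem_Ico.1 hk).1).ne')
  have hratio : ∀ n : ℕ, (∏ k ∈ Finset.Ico 1 ⌊(n:ℝ)*t⌋₊, f k) / (∏ k ∈ Finset.Ico 1 n, f k)
      = Real.exp (S ⌊(n:ℝ)*t⌋₊ - S n) := by
    intro n
    rw [Real.exp_sub, ← hlog, ← hlog, Real.exp_log (hL _), Real.exp_log (hL _)]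
  have hdiff : Tendsto (fun n : ℕ => S ⌊(n:ℝ)*t⌋₊ - S n) atTop (nhds 0) := by
    rw [Metric.tendsto_nhds]
    intro ε hε
    obtain ⟨B, hBpos, hBt, hBtt⟩ : ∃ B : ℝ, 0 < B ∧ t - 1 ≤ B ∧ 2/t ≤ B := by
      refine ⟨t + 2/t + 1, by positivity, ?_, ?_⟩
      · have : 0 < 2/t := by positivity
        linarith
      · linarith
    obtain ⟨ε', hε'pos, hε'half, hfinal⟩ :
        ∃ ε' : ℝ, 0 < ε' ∧ ε' ≤ 1/2 ∧ 2*ε'*B < ε := by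
      refine ⟨min (1/2) (ε/(4*B)), lt_min (by norm_num) (by positivity), min_le_left _ _, ?_⟩
      have h1 : min (1/2) (ε/(4*B)) ≤ ε/(4*B) := min_le_right _ _
      have h3 : min (1/2) (ε/(4*B)) * B ≤ (ε/(4*B)) * B :=
        mul_le_mul_of_nonneg_right h1 hBpos.le
      have h4 : (ε/(4*B)) * B = ε/4 := by field_simp
      nlinarith
    obtain ⟨N₀, hN₀⟩ := Metric.tendsto_atTop.1 hsmall ε' hε'pos
    have hk_bound : ∀ k : ℕ, max N₀ 1 ≤ k → |Real.log (f k)| ≤ 2*ε'/k := by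
      intro k hk
      have hkN : N₀ ≤ k := le_trans (le_max_left _ _) hk
      have hk1 : 1 ≤ k := le_trans (le_max_right _ _) hk
      have hkR : (1:ℝ) ≤ k := by exact_mod_cast hk1
      have hd := hN₀ k hkN
      rw [Real.dist_eq, sub_zero, abs_mul, abs_of_nonneg (by positivity : (0:ℝ) ≤ (k:ℝ))] at hd
      have hfk1 : |f k - 1| ≤ ε'/k := by
        rw [le_div_iff₀ (by linarith : (0:ℝ) < k), mul_comm]
        exact hd.le
      have hfk2 : |f k - 1| ≤ 1/2 := le_trans hfk1 (by
        calc ε'/(k:ℝ) ≤ ε'/1 := by gcongr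
          _ = ε' := by norm_num
          _ ≤ 1/2 := hε'half)
      have hfhalf : 1/2 ≤ f k := by
        rcases abs_le.1 hfk2 with ⟨hl, _⟩
        linarith
      calc |Real.log (f k)| ≤ 2 * |f k - 1| := abs_log_le_two_mul hfhalf
        _ ≤ 2 * (ε'/k) := by linarith
        _ = 2*ε'/k := by ring
    have hmtend : Tendsto (fun n : ℕ => ⌊(n:ℝ)*t⌋₊) atTop atTop :=
      tendsto_nat_floor_atTop.comp (tendsto_natCast_atTop_atTop.atTop_mul_const ht)
    filter_upwards [eventually_ge_atTop (max N₀ 1),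
      hmtend.eventually (eventually_ge_atTop (max N₀ 1)),
      (tendsto_natCast_atTop_atTop.atTop_mul_const ht).eventually
        (eventually_ge_atTop (2:ℝ))] with n hn hm hnt
    rw [Real.dist_eq, sub_zero]
    set m := ⌊(n:ℝ)*t⌋₊ with hm'
    have h1n : 1 ≤ n := le_trans (le_max_right _ _) hn
    have h1m : 1 ≤ m := le_trans (le_max_right _ _) hm
    have hnR : (1:ℝ) ≤ n := by exact_mod_cast h1n
    have hmR : (1:ℝ) ≤ m := by exact_mod_cast h1m
    have hn0R : (0:ℝ) < n := by linarith
    have hm0R : (0:ℝ) < m := by linarith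
    have hmle : (m:ℝ) ≤ (n:ℝ)*t := Nat.floor_le (by positivity)
    have hmgt : (n:ℝ)*t < (m:ℝ) + 1 := Nat.lt_floor_add_one _
    rcases le_total n m with hcase | hcase
    · have hsplit : S n + ∑ k ∈ Finset.Ico n m, Real.log (f k) = S m :=
        Finset.sum_Ico_consecutive _ h1n hcase
      have habs : S m - S n = ∑ k ∈ Finset.Ico n m, Real.log (f k) := by linarith
      rw [habs]
      have hcard : ((Finset.Ico n m).card : ℝ) = (m:ℝ) - n := by
        rw [Nat.card_Ico, Nat.cast_sub hcase]
      calc |∑ k ∈ Finset.Ico n m, Real.log (f k)|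
          ≤ ∑ k ∈ Finset.Ico n m, |Real.log (f k)| := Finset.abs_sum_le_sum_abs _ _
        _ ≤ (Finset.Ico n m).card • (2*ε'/n) := by
            apply Finset.sum_le_card_nsmul
            intro k hk
            obtain ⟨hk1, hk2⟩ := Finset.mem_Ico.1 hk
            refine le_trans (hk_bound k (le_trans hn hk1)) ?_
            have hkR : (n:ℝ) ≤ k := by exact_mod_cast hk1
            exact div_le_div_of_nonneg_left (by positivity) hn0R hkR
        _ = ((m:ℝ) - n) * (2*ε'/n) := by rw [nsmul_eq_mul, hcard]
        _ ≤ ((n:ℝ)*t - n) * (2*ε'/n) := by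
            have hsub : (m:ℝ) - n ≤ (n:ℝ)*t - n := by linarith
            exact mul_le_mul_of_nonneg_right hsub (by positivity)
        _ = 2*ε'*(t-1) := by field_simp
        _ ≤ 2*ε'*B := by nlinarith
        _ < ε := hfinal
    · have hsplit : S m + ∑ k ∈ Finset.Ico m n, Real.log (f k) = S n :=
        Finset.sum_Ico_consecutive _ h1m hcase
      have habs : S m - S n = -∑ k ∈ Finset.Ico m n, Real.log (f k) := by linarith
      rw [habs, abs_neg]
      have hcard : ((Finset.Ico m n).card : ℝ) = (n:ℝ) - m := by
        rw [Nat.card_Ico, Nat.cast_sub hcase]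
      have hm2 : (n:ℝ)*t/2 ≤ m := by linarith
      have hm2pos : (0:ℝ) < (n:ℝ)*t/2 := by positivity
      calc |∑ k ∈ Finset.Ico m n, Real.log (f k)|
          ≤ ∑ k ∈ Finset.Ico m n, |Real.log (f k)| := Finset.abs_sum_le_sum_abs _ _
        _ ≤ (Finset.Ico m n).card • (2*ε'/m) := by
            apply Finset.sum_le_card_nsmul
            intro k hk
            obtain ⟨hk1, hk2⟩ := Finset.mem_Ico.1 hk
            refine le_trans (hk_bound k (le_trans hm hk1)) ?_
            have hkR : (m:ℝ) ≤ k := by exact_mod_cast hk1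
            exact div_le_div_of_nonneg_left (by positivity) hm0R hkR
        _ = ((n:ℝ) - m) * (2*ε'/m) := by rw [nsmul_eq_mul, hcard]
        _ ≤ (n:ℝ) * (2*ε'/m) := by
            have hsub : (n:ℝ) - m ≤ n := by linarith
            exact mul_le_mul_of_nonneg_right hsub (by positivity)
        _ ≤ (n:ℝ) * (2*ε'/((n:ℝ)*t/2)) := by
            have h5 : 2*ε'/(m:ℝ) ≤ 2*ε'/((n:ℝ)*t/2) :=
              div_le_div_of_nonneg_left (by positivity) hm2pos hm2
            exact mul_le_mul_of_nonneg_left h5 (by positivity)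
        _ = 2*ε'*(2/t) := by field_simp
        _ ≤ 2*ε'*B := by nlinarith
        _ < ε := hfinal
  have hexp := (Real.continuous_exp.tendsto 0).comp hdiff
  rw [Real.exp_zero] at hexp
  exact hexp.congr (fun n => (hratio n).symm)

/-- a_{⌊nt⌋} A_n ∼ √C t^{α(2p-1)} √n. -/
theorem stmt_19 (p α : ℝ) (hp : p ∈ Set.Icc (0:ℝ) 1) (hα : α ∈ Set.Icc (0:ℝ) 1)
    (hcrit : α * (2*p-1) < 1/2)
    (αs : ℕ → ℝ) (hαs : ∀ k, αs k ∈ Set.Icc (0:ℝ) 1)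
    (hαconv : Tendsto αs atTop (nhds α))
    (a ℓ : ℕ → ℝ)
    (ha : ∀ n, a n = ∏ k ∈ Finset.Icc 1 (n-1), (1 + (2*p-1) * αs (k+1) / (k:ℝ)))
    (hℓ : ∀ n, ℓ n = ∏ k ∈ Finset.Icc 1 (n-1),
      (1 + (2*p-1) * (αs (k+1) - α) / ((k:ℝ) + (2*p-1)*α)))
    (A : ℕ → ℝ) (hApos : ∀ n, 0 ≤ A n)
    (C : ℝ) (hC : 0 < C)
    (hA : Tendsto (fun n : ℕ =>
        (A n)^2 / (C * (Real.Gamma (α*(2*p-1) + 1))^2 *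
          (n:ℝ) ^ (1 - 2*α*(2*p-1)) * (ℓ n)⁻¹^2))
      atTop (nhds 1)) :
    ∀ t > (0:ℝ), Tendsto (fun n : ℕ =>
        a ⌊(n:ℝ)*t⌋₊ * A n / (Real.sqrt C * t ^ (α*(2*p-1)) * Real.sqrt n))
      atTop (nhds 1) := by
  obtain ⟨hp0, hp1⟩ := hp
  obtain ⟨hα0, hα1⟩ := hα
  intro t ht
  have hγlb : (-1:ℝ) ≤ α*(2*p-1) := by nlinarith
  -- Gamma factor is nonzero
  have hGne : Real.Gamma (α*(2*p-1) + 1) ≠ 0 := by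
    intro hG0
    have h0 : ∀ n : ℕ, (A n)^2 / (C * (Real.Gamma (α*(2*p-1) + 1))^2 *
          (n:ℝ) ^ (1 - 2*α*(2*p-1)) * (ℓ n)⁻¹^2) = 0 := by
      intro n; rw [hG0]; simp
    have h1 : Tendsto (fun _ : ℕ => (0:ℝ)) atTop (nhds 1) := hA.congr h0
    have h2 := tendsto_nhds_unique h1 tendsto_const_nhds
    norm_num at h2
  have hγ : (-1:ℝ) < α*(2*p-1) := by
    rcases lt_or_eq_of_le hγlb with h | h
    · exact h
    · exfalso; apply hGne; rw [← h]; norm_num [Real.Gamma_zero]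
  have hG : 0 < Real.Gamma (α*(2*p-1) + 1) := Real.Gamma_pos_of_pos (by linarith)
  -- denominators are positive
  have hden : ∀ k : ℕ, 1 ≤ k → (0:ℝ) < (k:ℝ) + (2*p-1)*α := by
    intro k hk
    have hk1 : (1:ℝ) ≤ k := by exact_mod_cast hk
    nlinarith
  -- factors of ℓ are nonnegative
  have hfac_eq : ∀ k : ℕ, 1 ≤ k →
      1 + (2*p-1)*(αs (k+1) - α)/((k:ℝ) + (2*p-1)*α)
        = ((k:ℝ) + (2*p-1)*αs (k+1))/((k:ℝ) + (2*p-1)*α) := by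
    intro k hk
    have hd := (hden k hk).ne'
    field_simp
    ring
  have hfac_nonneg : ∀ k : ℕ, 1 ≤ k →
      0 ≤ 1 + (2*p-1)*(αs (k+1) - α)/((k:ℝ) + (2*p-1)*α) := by
    intro k hk
    rw [hfac_eq k hk]
    apply div_nonneg _ (hden k hk).le
    have hk1 : (1:ℝ) ≤ k := by exact_mod_cast hk
    obtain ⟨hs0, hs1⟩ := hαs (k+1)
    nlinarith
  have hℓnn : ∀ n, 0 ≤ ℓ n := by
    intro n
    rw [hℓ]
    exact Finset.prod_nonneg (fun k hk => hfac_nonneg k (Finset.mem_Icc.1 hk).1)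
  have hℓne : ∀ n, ℓ n ≠ 0 := by
    by_contra h
    push_neg at h
    obtain ⟨N, hN⟩ := h
    rw [hℓ] at hN
    obtain ⟨k₀, hk₀mem, hk₀⟩ := Finset.prod_eq_zero_iff.1 hN
    obtain ⟨hk₀1, hk₀2⟩ := Finset.mem_Icc.1 hk₀mem
    have hzero : ∀ n, N ≤ n → ℓ n = 0 := by
      intro n hn
      rw [hℓ]
      exact Finset.prod_eq_zero (Finset.mem_Icc.2 ⟨hk₀1, by omega⟩) hk₀
    have hev : (fun n : ℕ => (A n)^2 / (C * (Real.Gamma (α*(2*p-1) + 1))^2 *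
          (n:ℝ) ^ (1 - 2*α*(2*p-1)) * (ℓ n)⁻¹^2)) =ᶠ[atTop] fun _ => (0:ℝ) := by
      filter_upwards [eventually_ge_atTop N] with n hn
      rw [hzero n hn]
      simp
    have h1 : Tendsto (fun _ : ℕ => (0:ℝ)) atTop (nhds 1) := hA.congr' hev
    have h2 := tendsto_nhds_unique h1 tendsto_const_nhds
    norm_num at h2
  have hℓpos : ∀ n, 0 < ℓ n := fun n => lt_of_le_of_ne (hℓnn n) (Ne.symm (hℓne n))
  have hfacpos : ∀ k : ℕ, 1 ≤ k →
      0 < 1 + (2*p-1)*(αs (k+1) - α)/((k:ℝ) + (2*p-1)*α) := by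
    intro k hk
    refine lt_of_le_of_ne (hfac_nonneg k hk) (Ne.symm ?_)
    intro h0
    apply hℓne (k+1)
    rw [hℓ]
    simp only [Nat.add_sub_cancel]
    exact Finset.prod_eq_zero (Finset.mem_Icc.2 ⟨hk, le_refl k⟩) h0
  -- factorization a = g * ℓ
  have ha' : ∀ n, a n = (∏ k ∈ Finset.Icc 1 (n-1), (1 + (α*(2*p-1))/(k:ℝ))) * ℓ n := by
    intro n
    rw [ha, hℓ, ← Finset.prod_mul_distrib]
    apply Finset.prod_congr rfl
    intro k hk
    have hk1 : 1 ≤ k := (Finset.mem_Icc.1 hk).1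
    have hk0 : ((k:ℝ)) ≠ 0 := Nat.cast_ne_zero.2 (by omega)
    have hd := (hden k hk1).ne'
    field_simp
    ring
  -- the floor sequence tends to infinity
  have hnt_tend : Tendsto (fun n : ℕ => (n:ℝ)*t) atTop atTop :=
    tendsto_natCast_atTop_atTop.atTop_mul_const ht
  have hmtend : Tendsto (fun n : ℕ => ⌊(n:ℝ)*t⌋₊) atTop atTop :=
    tendsto_nat_floor_atTop.comp hnt_tend
  -- T1 : Gamma-product asymptotics along the floor sequence
  have T1 : Tendsto (fun n : ℕ =>
      (∏ k ∈ Finset.Icc 1 (⌊(n:ℝ)*t⌋₊-1), (1 + (α*(2*p-1))/(k:ℝ)))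
        * Real.Gamma ((α*(2*p-1))+1) / ((⌊(n:ℝ)*t⌋₊:ℝ))^(α*(2*p-1)))
      atTop (nhds 1) := (aux_gamma hγ).comp hmtend
  -- T2 : slowly varying factor
  have hshift : Tendsto (fun k : ℕ => αs (k+1)) atTop (nhds α) :=
    hαconv.comp (tendsto_add_atTop_nat 1)
  have hsm1 : Tendsto (fun k : ℕ => (2*p-1)*(αs (k+1) - α)) atTop (nhds 0) := by
    have hs0 : Tendsto (fun k : ℕ => αs (k+1) - α) atTop (nhds (α - α)) :=
      hshift.sub tendsto_const_nhds
    rw [sub_self] at hs0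
    have := hs0.const_mul (2*p-1)
    simpa using this
  have hsm2 : Tendsto (fun k : ℕ => (k:ℝ)/((k:ℝ)+(2*p-1)*α)) atTop (nhds 1) :=
    tendsto_natCast_div_add_atTop _
  have hsmall : Tendsto (fun k : ℕ =>
      (k:ℝ) * ((1 + (2*p-1)*(αs (k+1) - α)/((k:ℝ) + (2*p-1)*α)) - 1)) atTop (nhds 0) := by
    have h3 := hsm2.mul hsm1
    rw [one_mul] at h3
    exact h3.congr (fun k => by ring)
  have T2 : Tendsto (fun n : ℕ => ℓ ⌊(n:ℝ)*t⌋₊ / ℓ n) atTop (nhds 1) := by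
    have h := aux_slow ht
      (fun k => 1 + (2*p-1)*(αs (k+1) - α)/((k:ℝ) + (2*p-1)*α)) hfacpos hsmall
    apply h.congr
    intro n
    rw [hℓ, hℓ, Icc_one_sub_one_eq_Ico, Icc_one_sub_one_eq_Ico]
  -- T3 : A n asymptotics
  have hsq := (Real.continuous_sqrt.tendsto 1).comp hA
  rw [Real.sqrt_one] at hsq
  have T3 : Tendsto (fun n : ℕ => A n /
      (Real.sqrt C * Real.Gamma (α*(2*p-1) + 1) * (n:ℝ)^((1 - 2*α*(2*p-1))/2) * (ℓ n)⁻¹))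
      atTop (nhds 1) := by
    apply hsq.congr'
    filter_upwards [eventually_ge_atTop 1] with n hn
    have hn0 : (0:ℝ) < n := by exact_mod_cast hn
    show Real.sqrt ((A n)^2 / (C * (Real.Gamma (α*(2*p-1) + 1))^2 *
          (n:ℝ) ^ (1 - 2*α*(2*p-1)) * (ℓ n)⁻¹^2)) = _
    rw [Real.sqrt_div (sq_nonneg _), Real.sqrt_sq (hApos n)]
    congr 1
    rw [Real.sqrt_mul (by positivity), Real.sqrt_mul (by positivity),
      Real.sqrt_mul hC.le, Real.sqrt_sq hG.le, Real.sqrt_sq (inv_nonneg.2 (hℓnn n))]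
    have hpow : Real.sqrt ((n:ℝ) ^ (1 - 2*α*(2*p-1))) = (n:ℝ)^((1 - 2*α*(2*p-1))/2) := by
      rw [Real.sqrt_eq_rpow, ← Real.rpow_mul hn0.le, mul_one_div]
    rw [hpow]
  -- T4 : the rpow ratio
  have hbase : Tendsto (fun n : ℕ => ((⌊(n:ℝ)*t⌋₊:ℝ))/((n:ℝ)*t)) atTop (nhds 1) :=
    tendsto_nat_floor_div_atTop.comp hnt_tend
  have hrpw : Tendsto (fun n : ℕ => (((⌊(n:ℝ)*t⌋₊:ℝ))/((n:ℝ)*t))^(α*(2*p-1)))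
      atTop (nhds 1) := by
    have hc : ContinuousAt (fun x : ℝ => x ^ (α*(2*p-1))) 1 :=
      Real.continuousAt_rpow_const 1 _ (Or.inl one_ne_zero)
    have := hc.tendsto.comp hbase
    simpa [Real.one_rpow, Function.comp_def] using this
  have T4 : Tendsto (fun n : ℕ =>
      ((⌊(n:ℝ)*t⌋₊:ℝ))^(α*(2*p-1)) / ((n:ℝ)^(α*(2*p-1)) * t^(α*(2*p-1))))
      atTop (nhds 1) := by
    apply hrpw.congr'
    filter_upwards [eventually_ge_atTop 1] with n hn
    have hn0 : (0:ℝ) < n := by exact_mod_cast hn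
    rw [Real.div_rpow (Nat.cast_nonneg _) (by positivity), Real.mul_rpow hn0.le ht.le]
  -- assemble
  have Tot := T1.mul (T2.mul (T3.mul T4))
  rw [show (1:ℝ) * (1 * (1 * 1)) = 1 by norm_num] at Tot
  apply Tot.congr'
  filter_upwards [eventually_ge_atTop 1, hmtend.eventually (eventually_ge_atTop 1)]
    with n hn hm
  have hn0 : (0:ℝ) < n := by exact_mod_cast hn
  have hm0 : (0:ℝ) < (⌊(n:ℝ)*t⌋₊:ℝ) := by exact_mod_cast hm
  have key : (n:ℝ)^((1 - 2*α*(2*p-1))/2) * (n:ℝ)^(α*(2*p-1)) = Real.sqrt (n:ℝ) := by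
    rw [← Real.rpow_add hn0, Real.sqrt_eq_rpow]
    congr 1
    ring
  rw [ha']
  rw [show Real.sqrt (n:ℝ) = (n:ℝ)^((1 - 2*α*(2*p-1))/2) * (n:ℝ)^(α*(2*p-1)) from key.symm]
  have ne1 : Real.sqrt C ≠ 0 := (Real.sqrt_pos.2 hC).ne'
  have ne2 : ((⌊(n:ℝ)*t⌋₊:ℝ))^(α*(2*p-1)) ≠ 0 := (Real.rpow_pos_of_pos hm0 _).ne'
  have ne3 : (n:ℝ)^(α*(2*p-1)) ≠ 0 := (Real.rpow_pos_of_pos hn0 _).ne'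
  have ne4 : (n:ℝ)^((1 - 2*α*(2*p-1))/2) ≠ 0 := (Real.rpow_pos_of_pos hn0 _).ne'
  have ne5 : t^(α*(2*p-1)) ≠ 0 := (Real.rpow_pos_of_pos ht _).ne'
  have ne6 : ℓ n ≠ 0 := hℓne n
  have ne7 : ℓ ⌊(n:ℝ)*t⌋₊ ≠ 0 := hℓne _
  field_simp
end
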